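/- Let (Ω, ℱ, P) be a probability space, let Q, R : Ω → ℝ be independent, identically distributed measurable functions with 0 < Q ≤ 1 almost surely, and suppose that the extended-real integral ∫ (1/Q) dP = +∞. Let α ∈ ℝ and assume that for every integer k ≥ 1, 2·E[s_k(Q)] ≥ α·E[s_k(Q·R)]. Then α ≤ 1. -/

import Mathlib

open MeasureTheory ProbabilityTheory Finset
open scoped ENNReal NNReal

set_option maxHeartbeats 1000000

private lemma sk_nonneg {x : ℝ} (hx1 : x ≤ 1) (k : ℕ) :
    0 ≤ ∑ j ∈ Finset.range k, (1 - x) ^ j :=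
  Finset.sum_nonneg fun j _ => pow_nonneg (by linarith) j

private lemma sk_le {x : ℝ} (hx0 : 0 ≤ x) (hx1 : x ≤ 1) (k : ℕ) :
    ∑ j ∈ Finset.range k, (1 - x) ^ j ≤ k := by
  calc ∑ j ∈ Finset.range k, (1 - x) ^ j ≤ ∑ _j ∈ Finset.range k, (1 : ℝ) :=
        Finset.sum_le_sum fun j _ => pow_le_one₀ (by linarith) (by linarith)
    _ = k := by simp

private lemma sk_le_inv {x : ℝ} (hx : 0 < x) (hx1 : x ≤ 1) (k : ℕ) :
    ∑ j ∈ Finset.range k, (1 - x) ^ j ≤ 1 / x := by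
  rw [le_div_iff₀ hx]
  have h := geom_sum_mul (1 - x) k
  nlinarith [pow_nonneg (by linarith : (0:ℝ) ≤ 1 - x) k]

private lemma sk_mono {x y : ℝ} (hxy : x ≤ y) (hx : 0 ≤ x) (hy : y ≤ 1) (k : ℕ) :
    ∑ j ∈ Finset.range k, (1 - y) ^ j ≤ ∑ j ∈ Finset.range k, (1 - x) ^ j :=
  Finset.sum_le_sum fun j _ => pow_le_pow_left₀ (by linarith) (by linarith) j

private lemma sk_measurable (k : ℕ) :
    Measurable (fun x : ℝ => ∑ j ∈ Finset.range k, (1 - x) ^ j) := by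
  apply Finset.measurable_sum
  intro j _
  exact ((measurable_const.sub measurable_id).pow_const j)

/-- For `Q, R` i.i.d. with `0 < Q ≤ 1` a.s. and `∫⁻ 1/Q dP = ∞`, if
`2 E[s_k(Q)] ≥ α E[s_k(QR)]` for every `k ≥ 1`, then `α ≤ 1`. -/
theorem alpha_bound_infinite_expectation_case {Ω : Type*} [MeasurableSpace Ω]
    (P : Measure Ω) [IsProbabilityMeasure P]
    (Q R : Ω → ℝ) (hQ : Measurable Q) (hR : Measurable R)
    (hindep : IndepFun Q R P) (hid : IdentDistrib Q R P P)
    (hQ0 : ∀ᵐ ω ∂P, 0 < Q ω) (hQ1 : ∀ᵐ ω ∂P, Q ω ≤ 1)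
    (hinf : ∫⁻ ω, (ENNReal.ofReal (Q ω))⁻¹ ∂P = ⊤)
    (α : ℝ)
    (hineq : ∀ k : ℕ, 1 ≤ k →
      2 * (∫ ω, (∑ j ∈ Finset.range k, (1 - Q ω) ^ j) ∂P) ≥
        α * (∫ ω, (∑ j ∈ Finset.range k, (1 - Q ω * R ω) ^ j) ∂P)) :
    α ≤ 1 := by
  by_contra hα
  push_neg at hα
  have hαpos : (0:ℝ) < α := by linarith
  -- a.s. properties of R
  have hR0 : ∀ᵐ ω ∂P, 0 < R ω := hid.ae_snd measurableSet_Ioi hQ0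
  have hR1 : ∀ᵐ ω ∂P, R ω ≤ 1 := hid.ae_snd measurableSet_Iic hQ1
  -- choose ε and n with P(R < 1/(n+1)) ≤ ε
  set ε : ℝ := (α - 1) / (2 * α) with hεdef
  have hεpos : 0 < ε := div_pos (by linarith) (by linarith)
  have hnull : P {ω | R ω ≤ 0} = 0 := by
    have h := hR0
    rw [MeasureTheory.ae_iff] at h
    convert h using 2
    ext ω; simp [not_lt]
  set S : ℕ → Set Ω := fun n => {ω | R ω < 1 / ((n:ℝ) + 1)} with hSdef
  have hSmeas : ∀ n, MeasurableSet (S n) := fun n => hR measurableSet_Iio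
  have hSanti : Antitone S := by
    intro m n hmn ω hω
    simp only [hSdef, Set.mem_setOf_eq] at *
    have h1 : (1:ℝ) / ((n:ℝ) + 1) ≤ 1 / ((m:ℝ) + 1) := by
      apply one_div_le_one_div_of_le (by positivity)
      exact_mod_cast by omega
    linarith
  have hInter : (⋂ n, S n) ⊆ {ω | R ω ≤ 0} := by
    intro ω hω
    simp only [Set.mem_iInter, hSdef, Set.mem_setOf_eq] at hω ⊢
    by_contra hpos
    push_neg at hpos
    obtain ⟨n, hn⟩ := exists_nat_one_div_lt hpos
    exact absurd (hω n) (by push_neg; linarith [hn])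
  have htend : Filter.Tendsto (fun n => P (S n)) Filter.atTop (nhds 0) := by
    have h := MeasureTheory.tendsto_measure_iInter_atTop (μ := P)
      (fun n => (hSmeas n).nullMeasurableSet) hSanti ⟨0, measure_ne_top P _⟩
    have h0 : P (⋂ n, S n) = 0 :=
      le_antisymm (hnull ▸ measure_mono hInter) (by positivity)
    rw [h0] at h
    exact h
  have hεE : (0:ENNReal) < ENNReal.ofReal ε := by simp [hεpos]
  obtain ⟨n, hn⟩ : ∃ n, P (S n) < ENNReal.ofReal ε :=
    (htend.eventually (gt_mem_nhds hεE)).exists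
  have ht : (P (S n)).toReal ≤ ε := ENNReal.toReal_le_of_le_ofReal hεpos.le hn.le
  have ht0 : 0 ≤ (P (S n)).toReal := ENNReal.toReal_nonneg
  set c : ℝ := 1 / ((n:ℝ) + 1) with hcdef
  have hc : 0 < c := by positivity
  -- the sequence of expectations
  set A : ℕ → ℝ := fun k => ∫ ω, (∑ j ∈ Finset.range k, (1 - Q ω) ^ j) ∂P with hAdef
  set B : ℝ := 2 * α * ((n:ℝ) + 1) / (3 * (α - 1)) with hBdef
  have hBpos : 0 < B := by
    have hn1 : (0:ℝ) < (n:ℝ) + 1 := by positivity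
    apply div_pos (by nlinarith) (by linarith)
  -- Part 1: the bound A k ≤ B for k ≥ 1
  have hbound : ∀ k : ℕ, 1 ≤ k → A k ≤ B := by
    intro k hk
    set g : ℝ → ℝ := fun x => ∑ j ∈ Finset.range k, (1 - x) ^ j with hgdef
    have hg : Measurable g := sk_measurable k
    set h : ℝ → ℝ := Set.indicator (Set.Iio c) (fun _ => (1:ℝ)) with hhdef
    have hh : Measurable h := measurable_const.indicator measurableSet_Iio
    -- integrabilities
    have hQm : AEStronglyMeasurable (fun ω => g (Q ω)) P :=
      (hg.comp hQ).aestronglyMeasurable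
    have hRm : AEStronglyMeasurable (fun ω => g (R ω)) P :=
      (hg.comp hR).aestronglyMeasurable
    have hQRm : AEStronglyMeasurable (fun ω => g (Q ω * R ω)) P :=
      (hg.comp (hQ.mul hR)).aestronglyMeasurable
    have hQint : Integrable (fun ω => g (Q ω)) P := by
      refine ⟨hQm, HasFiniteIntegral.of_bounded (C := (k:ℝ)) ?_⟩
      filter_upwards [hQ0, hQ1] with ω h0 h1
      rw [Real.norm_eq_abs, abs_le]
      exact ⟨by linarith [sk_nonneg h1 k, (Nat.cast_nonneg k : (0:ℝ) ≤ k)],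
        sk_le h0.le h1 k⟩
    have hRint : Integrable (fun ω => g (R ω)) P := by
      refine ⟨hRm, HasFiniteIntegral.of_bounded (C := (k:ℝ)) ?_⟩
      filter_upwards [hR0, hR1] with ω h0 h1
      rw [Real.norm_eq_abs, abs_le]
      exact ⟨by linarith [sk_nonneg h1 k, (Nat.cast_nonneg k : (0:ℝ) ≤ k)],
        sk_le h0.le h1 k⟩
    have hQRint : Integrable (fun ω => g (Q ω * R ω)) P := by
      refine ⟨hQRm, HasFiniteIntegral.of_bounded (C := (k:ℝ)) ?_⟩
      filter_upwards [hQ0, hQ1, hR0, hR1] with ω h0 h1 h2 h3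
      have hqr0 : 0 < Q ω * R ω := mul_pos h0 h2
      have hqr1 : Q ω * R ω ≤ 1 := by nlinarith
      rw [Real.norm_eq_abs, abs_le]
      exact ⟨by linarith [sk_nonneg hqr1 k, (Nat.cast_nonneg k : (0:ℝ) ≤ k)],
        sk_le hqr0.le hqr1 k⟩
    have hPm : AEStronglyMeasurable (fun ω => h (R ω)) P :=
      (hh.comp hR).aestronglyMeasurable
    have hPint : Integrable (fun ω => g (Q ω) * h (R ω)) P := by
      refine ⟨hQm.mul hPm, HasFiniteIntegral.of_bounded (C := (k:ℝ)) ?_⟩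
      filter_upwards [hQ0, hQ1] with ω h0 h1
      have hgb : 0 ≤ g (Q ω) ∧ g (Q ω) ≤ k := ⟨sk_nonneg h1 k, sk_le h0.le h1 k⟩
      have hhb : 0 ≤ h (R ω) ∧ h (R ω) ≤ 1 := by
        simp only [hhdef]
        unfold c
        by_cases hm : R ω ∈ Set.Iio c
        · rw [Set.indicator_of_mem hm]; norm_num
        · rw [Set.indicator_of_notMem hm]; norm_num
      rw [Real.norm_eq_abs, abs_le]
      constructor
      · nlinarith [hgb.1, hgb.2, hhb.1, hhb.2, (Nat.cast_nonneg k : (0:ℝ) ≤ k)]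
      · nlinarith [hgb.1, hgb.2, hhb.1, hhb.2]
    -- the pointwise inequality
    have hpt : ∀ᵐ ω ∂P,
        g (Q ω) + g (R ω) - ((n:ℝ) + 1) - g (Q ω) * h (R ω) ≤ g (Q ω * R ω) := by
      filter_upwards [hQ0, hQ1, hR0, hR1] with ω h0 h1 h2 h3
      have hqr0 : (0:ℝ) ≤ Q ω * R ω := (mul_pos h0 h2).le
      by_cases hm : R ω ∈ Set.Iio c
      · have hind : h (R ω) = 1 := by simp only [hhdef]; rw [Set.indicator_of_mem hm]
        have hmon : g (R ω) ≤ g (Q ω * R ω) := by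
          apply sk_mono _ hqr0 h3 k
          nlinarith
        rw [hind]
        have hn1 : (0:ℝ) ≤ (n:ℝ) + 1 := by positivity
        linarith
      · have hind : h (R ω) = 0 := by simp only [hhdef]; rw [Set.indicator_of_notMem hm]
        have hcR : c ≤ R ω := Set.notMem_Iio.mp hm
        have h6 : g (R ω) ≤ 1 / R ω := sk_le_inv h2 h3 k
        have h7 : 1 / R ω ≤ (n:ℝ) + 1 := by
          rw [div_le_iff₀ h2]
          have : (1:ℝ) ≤ ((n:ℝ) + 1) * R ω := by
            calc (1:ℝ) = ((n:ℝ) + 1) * c := by rw [hcdef]; field_simp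
              _ ≤ ((n:ℝ) + 1) * R ω := by
                  apply mul_le_mul_of_nonneg_left hcR (by positivity)
          linarith
        have hmon : g (Q ω) ≤ g (Q ω * R ω) := by
          apply sk_mono _ hqr0 h1 k
          nlinarith
        rw [hind]
        linarith
    -- integrate
    have hLint : Integrable
        (fun ω => g (Q ω) + g (R ω) - ((n:ℝ) + 1) - g (Q ω) * h (R ω)) P :=
      ((hQint.add hRint).sub (integrable_const _)).sub hPint
    have hmono := integral_mono_ae hLint hQRint hpt
    -- compute the left side
    have hERA : ∫ ω, g (R ω) ∂P = A k := ((hid.comp hg).integral_eq).symm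
    have hEprod : ∫ ω, g (Q ω) * h (R ω) ∂P = A k * (P (S n)).toReal := by
      have hi : IndepFun (fun ω => g (Q ω)) (fun ω => h (R ω)) P :=
        hindep.comp hg hh
      have := hi.integral_fun_mul_eq_mul_integral hQm hPm
      have hEh : ∫ ω, h (R ω) ∂P = (P (S n)).toReal := by
        have heq : (fun ω => h (R ω)) =
            Set.indicator (S n) (fun _ => (1:ℝ)) := by
          ext ω
          by_cases hm : R ω ∈ Set.Iio c
          · have hm' : ω ∈ S n := by simpa [hSdef, hcdef, Set.mem_Iio] using hm
            simp only [hhdef]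
            rw [Set.indicator_of_mem hm, Set.indicator_of_mem hm']
          · have hm' : ω ∉ S n := by simpa [hSdef, hcdef, Set.mem_Iio] using hm
            simp only [hhdef]
            rw [Set.indicator_of_notMem hm, Set.indicator_of_notMem hm']
        rw [heq, integral_indicator_const (1:ℝ) (hSmeas n), smul_eq_mul, mul_one]
        rfl
      calc ∫ ω, g (Q ω) * h (R ω) ∂P
          = (∫ ω, g (Q ω) ∂P) * ∫ ω, h (R ω) ∂P := this
        _ = A k * (P (S n)).toReal := by rw [hEh]
    have hLeq : ∫ ω, (g (Q ω) + g (R ω) - ((n:ℝ) + 1) - g (Q ω) * h (R ω)) ∂P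
        = A k + A k - ((n:ℝ) + 1) - A k * (P (S n)).toReal := by
      have e1 : ∫ ω, (g (Q ω) + g (R ω) - ((n:ℝ) + 1) - g (Q ω) * h (R ω)) ∂P
          = (∫ ω, (g (Q ω) + g (R ω) - ((n:ℝ) + 1)) ∂P) - ∫ ω, g (Q ω) * h (R ω) ∂P :=
        integral_sub ((hQint.add hRint).sub (integrable_const ((n:ℝ) + 1))) hPint
      have e2 : ∫ ω, (g (Q ω) + g (R ω) - ((n:ℝ) + 1)) ∂P
          = (∫ ω, (g (Q ω) + g (R ω)) ∂P) - ∫ _ω, ((n:ℝ) + 1) ∂P :=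
        integral_sub (hQint.add hRint) (integrable_const ((n:ℝ) + 1))
      have e3 : ∫ ω, (g (Q ω) + g (R ω)) ∂P
          = (∫ ω, g (Q ω) ∂P) + ∫ ω, g (R ω) ∂P := integral_add hQint hRint
      rw [e1, e2, e3, hERA, hEprod, integral_const]
      simp
      rfl
    rw [hLeq] at hmono
    -- nonnegativity of A k
    have hA0 : 0 ≤ A k := by
      apply integral_nonneg_of_ae
      filter_upwards [hQ1] with ω h1
      exact sk_nonneg h1 k
    -- combine with hineq
    have hkey := hineq k hk
    -- 2 * A k ≥ α * ∫ g(QR) ≥ α * (2 A k - (n+1) - A k * t) with t ≤ ε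
    have hchain : α * (2 * A k - ((n:ℝ)+1) - A k * ε) ≤ 2 * A k := by
      have h1 : 2 * A k - ((n:ℝ)+1) - A k * ε ≤
          A k + A k - ((n:ℝ) + 1) - A k * (P (S n)).toReal := by
        have : A k * (P (S n)).toReal ≤ A k * ε := mul_le_mul_of_nonneg_left ht hA0
        linarith
      calc α * (2 * A k - ((n:ℝ)+1) - A k * ε)
          ≤ α * (A k + A k - ((n:ℝ) + 1) - A k * (P (S n)).toReal) :=
            mul_le_mul_of_nonneg_left h1 hαpos.le
        _ ≤ α * ∫ ω, g (Q ω * R ω) ∂P := mul_le_mul_of_nonneg_left hmono hαpos.le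
        _ ≤ 2 * A k := hkey
    -- derive A k ≤ B
    have hαε : α * ε = (α - 1) / 2 := by
      rw [hεdef]; field_simp
    have hchain2 : 2*α*A k - α*((n:ℝ)+1) - ((α-1)/2)*A k ≤ 2*A k := by
      have e : α * (2 * A k - ((n:ℝ)+1) - A k * ε)
          = 2*α*A k - α*((n:ℝ)+1) - (α*ε)*(A k) := by ring
      rw [e, hαε] at hchain
      linarith [hchain]
    show A k ≤ B
    rw [hBdef, le_div_iff₀ (by nlinarith : (0:ℝ) < 3 * (α - 1))]
    linarith [hchain2]
  -- Part 2: A is unbounded, contradiction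
  classical
  set r : Ω → ℝ≥0∞ := fun ω => ENNReal.ofReal (1 - Q ω) with hrdef
  have hrm : Measurable r := ENNReal.measurable_ofReal.comp (measurable_const.sub hQ)
  set f : ℕ → Ω → ℝ≥0∞ := fun k ω => ∑ j ∈ Finset.range k, r ω ^ j with hfdef
  have hfm : ∀ k, Measurable (f k) := fun k =>
    Finset.measurable_sum _ (fun j _ => hrm.pow_const j)
  have hfmono : Monotone f := by
    intro k l hkl ω
    exact Finset.sum_le_sum_of_subset (Finset.range_subset_range.2 hkl)
  have hsup : ∫⁻ ω, ⨆ k, f k ω ∂P = ⊤ := by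
    rw [← hinf]
    apply lintegral_congr_ae
    filter_upwards [hQ0, hQ1] with ω h0 h1
    have h2 : (1:ℝ≥0∞) - r ω = ENNReal.ofReal (Q ω) := by
      have h3 := ENNReal.ofReal_sub 1 (by linarith : (0:ℝ) ≤ 1 - Q ω)
      rw [show (1:ℝ) - (1 - Q ω) = Q ω by ring, ENNReal.ofReal_one] at h3
      exact h3.symm
    calc ⨆ k, f k ω = ∑' j, r ω ^ j := ENNReal.tsum_eq_iSup_nat.symm
      _ = (1 - r ω)⁻¹ := ENNReal.tsum_geometric (r ω)
      _ = (ENNReal.ofReal (Q ω))⁻¹ := by rw [h2]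
  have hlsup : ⨆ k, ∫⁻ ω, f k ω ∂P = ⊤ := by
    rw [← lintegral_iSup hfm hfmono]
    exact hsup
  have hfin : ∀ k, ∫⁻ ω, f k ω ∂P ≤ k := by
    intro k
    calc ∫⁻ ω, f k ω ∂P ≤ ∫⁻ _, (k : ℝ≥0∞) ∂P := by
          apply lintegral_mono_ae
          filter_upwards [hQ0, hQ1] with ω h0 h1
          calc f k ω ≤ ∑ _j ∈ Finset.range k, (1:ℝ≥0∞) := by
                apply Finset.sum_le_sum
                intro j _
                apply pow_le_one'
                rw [hrdef]
                exact ENNReal.ofReal_le_one.2 (by linarith)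
            _ = k := by simp
      _ = k := by simp
  have hAk : ∀ k, A k = (∫⁻ ω, f k ω ∂P).toReal := by
    intro k
    have hm : AEStronglyMeasurable (fun ω => ∑ j ∈ Finset.range k, (1 - Q ω) ^ j) P :=
      ((sk_measurable k).comp hQ).aestronglyMeasurable
    have hnn : 0 ≤ᵐ[P] fun ω => ∑ j ∈ Finset.range k, (1 - Q ω) ^ j := by
      filter_upwards [hQ1] with ω h1; exact sk_nonneg h1 k
    have heq := integral_eq_lintegral_of_nonneg_ae hnn hm
    show (∫ ω, (∑ j ∈ Finset.range k, (1 - Q ω) ^ j) ∂P) = (∫⁻ ω, f k ω ∂P).toReal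
    rw [heq]
    congr 1
    apply lintegral_congr_ae
    filter_upwards [hQ1] with ω h1
    rw [ENNReal.ofReal_sum_of_nonneg (fun j _ => pow_nonneg (by linarith) j)]
    exact Finset.sum_congr rfl fun j _ => ENNReal.ofReal_pow (by linarith) j
  obtain ⟨k, hk⟩ : ∃ k, ENNReal.ofReal B < ∫⁻ ω, f k ω ∂P := by
    by_contra hcon
    push_neg at hcon
    have : (⨆ k, ∫⁻ ω, f k ω ∂P) ≤ ENNReal.ofReal B := iSup_le hcon
    rw [hlsup] at this
    exact absurd this (by simp)
  have hne : ∫⁻ ω, f k ω ∂P ≠ ⊤ :=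
    ne_top_of_le_ne_top (by simp : ((k:ℝ≥0∞)) ≠ ⊤) (hfin k)
  have hBA : B < A k := by
    rw [hAk k]
    exact (ENNReal.ofReal_lt_iff_lt_toReal hBpos.le hne).1 hk
  have hk1 : 1 ≤ k := by
    by_contra hk0
    push_neg at hk0
    interval_cases k
    have : A 0 = 0 := by simp [hAdef]
    linarith
  linarith [hbound k hk1]
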